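/- Let X and Y be square-integrable random variables and 𝒢 a sub-σ-algebra such that both E[X | 𝒢] and E[Y | 𝒢] are increasing functions of the underlying i.i.d. weights (in the sense of monotone coordinate functions on a product space with the FKG/Harris property). If E[XY | 𝒢] ≥ E[X | 𝒢]·E[Y | 𝒢] + β·1_𝓔 almost surely for an event 𝓔 ∈ 𝒢 with P(𝓔) ≥ p, then Cov(X,Y) ≥ βp. -/

import Mathlib

open MeasureTheory ProbabilityTheory

/-- The covariance of two real random variables. -/
noncomputable def cov {Ω : Type*} {mΩ : MeasurableSpace Ω} (P : Measure Ω) (f g : Ω → ℝ) : ℝ :=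
  (∫ ω, f ω * g ω ∂P) - (∫ ω, f ω ∂P) * (∫ ω, g ω ∂P)

lemma memℒp_two_condexp {Ω : Type} {m : MeasurableSpace Ω} {mΩ : MeasurableSpace Ω}
    {P : Measure Ω} [IsFiniteMeasure P] (hm : m ≤ mΩ) {X : Ω → ℝ}
    (hX : MemLp X 2 P) : MemLp (P[X|m]) 2 P := by
  set g : Lp ℝ 2 P := hX.toLp X with hg
  have hfun : MemLp ((condExpL2 ℝ ℝ hm g : Lp ℝ 2 P) : Ω → ℝ) 2 P := Lp.memLp _
  have heq : ((condExpL2 ℝ ℝ hm g : Lp ℝ 2 P) : Ω → ℝ) =ᵐ[P] P[X|m] := by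
    refine ae_eq_condExp_of_forall_setIntegral_eq hm (hX.integrable one_le_two)
      (fun s hs hμs => ?_) (fun s hs hμs => ?_) ?_
    · exact integrableOn_condExpL2_of_measure_ne_top hm hμs.ne g
    · rw [integral_condExpL2_eq hm g hs hμs.ne]
      exact setIntegral_congr_ae (hm s hs) ((hX.coeFn_toLp).mono fun x hx _ => hx)
    · exact aestronglyMeasurable_condExpL2 hm g
  exact hfun.ae_eq heq

lemma stmt6_aux {Ω : Type} {m : MeasurableSpace Ω} {mΩ : MeasurableSpace Ω}
    (P : Measure Ω) [IsProbabilityMeasure P] (hm : m ≤ mΩ)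
    (X Y : Ω → ℝ) (hX : MemLp X 2 P) (hY : MemLp Y 2 P)
    (hXY : Integrable (fun ω => X ω * Y ω) P)
    (β p : ℝ) (hβ : 0 < β) (hp0 : 0 ≤ p) (hp1 : p ≤ 1)
    (E : Set Ω) (hE : MeasurableSet[m] E) (hPE : p ≤ (P E).toReal)
    (hcond : ∀ᵐ ω ∂P,
      (P[X|m]) ω * (P[Y|m]) ω + β * E.indicator (fun _ => (1 : ℝ)) ω
        ≤ (P[fun ω' => X ω' * Y ω'|m]) ω)
    (hFKG : (∫ ω, X ω ∂P) * (∫ ω, Y ω ∂P) ≤ ∫ ω, (P[X|m]) ω * (P[Y|m]) ω ∂P) :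
    β * p ≤ cov P X Y := by
  have hEm : MeasurableSet[mΩ] E := hm _ hE
  have hXc : MemLp (P[X|m]) 2 P := memℒp_two_condexp hm hX
  have hYc : MemLp (P[Y|m]) 2 P := memℒp_two_condexp hm hY
  have hprod : Integrable (fun ω => (P[X|m]) ω * (P[Y|m]) ω) P := by
    have h := (hYc.smul (r := 1) hXc).integrable le_rfl
    exact h
  have hind : Integrable (fun ω => β * E.indicator (fun _ => (1 : ℝ)) ω) P :=
    ((integrable_const (1 : ℝ)).indicator hEm).const_mul β
  have h1 : ∫ ω, ((P[X|m]) ω * (P[Y|m]) ω + β * E.indicator (fun _ => (1 : ℝ)) ω) ∂P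
      ≤ ∫ ω, (P[fun ω' => X ω' * Y ω'|m]) ω ∂P :=
    integral_mono_ae (hprod.add hind) integrable_condExp hcond
  rw [integral_condExp hm, integral_add hprod hind, integral_const_mul,
    integral_indicator hEm] at h1
  simp only [integral_const, smul_eq_mul, mul_one, Measure.restrict_apply_univ, measureReal_restrict_apply_univ,
    Measure.real] at h1
  have h2 : β * p ≤ β * (P E).toReal := mul_le_mul_of_nonneg_left hPE hβ.le
  unfold cov
  nlinarith [h1, hFKG]

/-- if `E[XY|𝒢] ≥ E[X|𝒢]·E[Y|𝒢] + β·1_𝓔` a.s. with `𝓔 ∈ 𝒢`, `P(𝓔) ≥ p`,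
and the conditional expectations `E[X|𝒢]`, `E[Y|𝒢]` are positively correlated (the
FKG/Harris consequence of their being increasing functions of i.i.d. weights), then
`Cov(X,Y) ≥ βp`. -/
theorem stmt6 {Ω : Type} [mΩ : MeasurableSpace Ω] (P : Measure Ω) [IsProbabilityMeasure P]
    (m : MeasurableSpace Ω) (hm : m ≤ mΩ)
    (X Y : Ω → ℝ) (hX : MemLp X 2 P) (hY : MemLp Y 2 P)
    (hXY : Integrable (fun ω => X ω * Y ω) P)
    (β p : ℝ) (hβ : 0 < β) (hp0 : 0 ≤ p) (hp1 : p ≤ 1)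
    (E : Set Ω) (hE : MeasurableSet[m] E) (hPE : p ≤ (P E).toReal)
    (hcond : ∀ᵐ ω ∂P,
      (P[X|m]) ω * (P[Y|m]) ω + β * E.indicator (fun _ => (1 : ℝ)) ω
        ≤ (P[fun ω' => X ω' * Y ω'|m]) ω)
    (hFKG : (∫ ω, X ω ∂P) * (∫ ω, Y ω ∂P) ≤ ∫ ω, (P[X|m]) ω * (P[Y|m]) ω ∂P) :
    β * p ≤ cov P X Y :=
  stmt6_aux P hm X Y hX hY hXY β p hβ hp0 hp1 E hE hPE hcond hFKG
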